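/- Let n ≥ 1. (1) Every C^n-function f : R → K is an n-th Lipschitz function, i.e. sup{|Φ_n f(x_1,…,x_{n+1})| : (x_1,…,x_{n+1}) ∈ ∇^{n+1}R} < ∞. (2) Every n-th Lipschitz function f : R → K is a C^{n−1}-function. -/

import Mathlib

open scoped ENNReal NNReal
open Filter Topology

noncomputable section

namespace DSW

variable {K : Type*} [NontriviallyNormedField K] [CompleteSpace K] [IsUltrametricDist K]

/-- The ring of integers `R = {x : K | ‖x‖ ≤ 1}`, as a subset of `K`. -/
def Rint (K : Type*) [NontriviallyNormedField K] : Set K := {x : K | ‖x‖ ≤ 1}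

/-- `∇ⁿR`: the set of tuples of pairwise distinct elements of `R`. -/
def nabla (K : Type*) [NontriviallyNormedField K] (n : ℕ) : Set (Fin n → K) :=
  {x | (∀ i, ‖x i‖ ≤ 1) ∧ Function.Injective x}

/-- The `n`-th difference quotient `Φₙ f`. -/
def Phi (f : K → K) : ∀ n : ℕ, (Fin (n + 1) → K) → K
  | 0, x => f (x 0)
  | n + 1, x =>
      (Phi f n (Fin.cons (x 0) fun i => x i.succ.succ) -
        Phi f n (Fin.cons (x 1) fun i => x i.succ.succ)) / (x 0 - x 1)

/-- `f` is a `Cⁿ`-function: `Φₙ f` extends to a continuous function on `R^(n+1)`. -/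
def IsCn (f : K → K) (n : ℕ) : Prop :=
  ∃ g : (Fin (n + 1) → K) → K,
    ContinuousOn g {x | ∀ i, ‖x i‖ ≤ 1} ∧
      ∀ x : Fin (n + 1) → K, (∀ i, ‖x i‖ ≤ 1) → Function.Injective x → g x = Phi f n x

/-- `Dₙ f a = Φₙ f (a, …, a)`, defined (for `n ≥ 1`) as the limit of `Φₙ f` at the
diagonal point `(a, …, a)`, and `D₀ f = f`. -/
def Dq (f : K → K) : ℕ → K → K
  | 0 => f
  | n + 1 => fun a =>
      limUnder (𝓝[{x : Fin (n + 2) → K | Function.Injective x}] fun _ => a) (Phi f (n + 1))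

/-- `ψⱼ f (x, y) = (f x − f y − ∑_{l=1}^{j} (x−y)^l Dₗf y) / (x−y)^(j+1)`. -/
def psi (f : K → K) (j : ℕ) (x y : K) : K :=
  (f x - f y - ∑ l ∈ Finset.Icc 1 j, (x - y) ^ l * Dq f l y) / (x - y) ^ (j + 1)

variable (π : K) (𝒯 : Set K)

/-- `ℛₘ`: the set of sums `∑_{i<m} aᵢ πⁱ` with digits in `𝒯`. -/
def Rm (m : ℕ) : Set K :=
  {x | ∃ a : Fin m → K, (∀ i, a i ∈ 𝒯) ∧ x = ∑ i, a i * π ^ (i : ℕ)}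

/-- `ℛ = ⋃ₘ ℛₘ`. -/
def RR : Set K := ⋃ m, Rm π 𝒯 m

/-- `ℛ₊ = ℛ \ {0}`. -/
def RPlus : Set K := RR π 𝒯 \ {0}

/-- The length `l(r)`: the least `m` with `r ∈ ℛₘ`. -/
def len (r : K) : ℕ := sInf {m | r ∈ Rm π 𝒯 m}

/-- `χ_r`: characteristic function of the disk `{x : ‖x − r‖ ≤ ‖π‖^(l r)}`. -/
def chi (r x : K) : K := if ‖x - r‖ ≤ ‖π‖ ^ len π 𝒯 r then 1 else 0

/-- The truncation `x_m`: the unique element of `ℛₘ` with `‖x − x_m‖ ≤ ‖π‖^m`. -/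
def trunc (x : K) (m : ℕ) : K :=
  Classical.epsilon fun s => s ∈ Rm π 𝒯 m ∧ ‖x - s‖ ≤ ‖π‖ ^ m

/-- `r₋`: the truncation of `r` dropping the top digit. -/
def rminus (r : K) : K := trunc π 𝒯 r (len π 𝒯 r - 1)

open Classical in
/-- `γ_r = 1` if `r = 0`, `γ_r = r − r₋` otherwise. -/
def gamma (r : K) : K := if r = 0 then 1 else r - rminus π 𝒯 r

open Classical in
/-- The wavelet coefficients `b_r(f)` of a continuous function. -/
def b0 (f : K → K) (r : K) : K := if r = 0 then f 0 else f r - f (rminus π 𝒯 r)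

/-- `c` is the coefficient family of the expansion of `f` with respect to the wavelet
basis `{γ_r^(n−j) (x − r)^j χ_r(x) : r ∈ ℛ, 0 ≤ j ≤ n}` of `Cⁿ(R, K)`. -/
def IsExpansion (n : ℕ) (f : K → K) (c : K → ℕ → K) : Prop :=
  ∀ x ∈ Rint K, HasSum
    (fun p : RR π 𝒯 × Fin (n + 1) =>
      c ↑p.1 ↑p.2 * gamma π 𝒯 ↑p.1 ^ (n - (p.2 : ℕ)) * (x - ↑p.1) ^ (p.2 : ℕ) *
        chi π 𝒯 ↑p.1 x)
    (f x)

/-- The coefficients `b_r^{n,j}(f)` of the expansion of `f ∈ Cⁿ(R,K)`. -/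
def bcoef (n : ℕ) (f : K → K) : K → ℕ → K := Classical.epsilon (IsExpansion π 𝒯 n f)

/-- The norm `|f|_n` on `Cⁿ(R, K)`, with values in `ℝ≥0∞`; `|f|_0` is the sup norm and
`|f|_(n+1) = sup_{r ∈ ℛ} max_{0 ≤ j ≤ n} |b_r^{n,j}(f) γ_r⁻¹|`. -/
def CnNorm : ℕ → (K → K) → ℝ≥0∞
  | 0, f => ⨆ x : Rint K, (‖f ↑x‖₊ : ℝ≥0∞)
  | n + 1, f =>
      ⨆ r : RR π 𝒯, ⨆ j : Fin (n + 1),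
        (‖bcoef π 𝒯 n f ↑r ↑j * (gamma π 𝒯 ↑r)⁻¹‖₊ : ℝ≥0∞)

/-- `K` is a local field with uniformizer `π`, residue field of cardinality `q`, and
set of residue representatives `𝒯` (containing `0`). -/
structure LocalFieldData (π : K) (𝒯 : Set K) (q : ℕ) : Prop where
  one_lt_q : 1 < q
  norm_pi : ‖π‖ = (q : ℝ)⁻¹
  norm_discrete : ∀ x : K, x ≠ 0 → ∃ n : ℤ, ‖x‖ = ‖π‖ ^ n
  rep_subset : 𝒯 ⊆ Rint K
  zero_mem : (0 : K) ∈ 𝒯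
  finite_rep : 𝒯.Finite
  card_rep : Nat.card 𝒯 = q
  rep_unique : ∀ x : K, ‖x‖ ≤ 1 → ∃! t, t ∈ 𝒯 ∧ ‖x - t‖ < 1


/-- The norm `|f|₁ = sup_{r ∈ ℛ} |b_r(f) γ_r⁻¹|` on `C¹(R, K)`. -/
def wnorm1 (f : K → K) : ℝ≥0∞ :=
  ⨆ r : RR π 𝒯, (‖b0 π 𝒯 f ↑r * (gamma π 𝒯 ↑r)⁻¹‖₊ : ℝ≥0∞)

/-- The `Cⁿ`-antiderivation `Pₙ f (x) = ∑_{j<n} ∑_m f⁽ʲ⁾(x_m)/(j+1)! (x_{m+1} − x_m)^(j+1)`. -/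
def Pn (n : ℕ) (f : K → K) (x : K) : K :=
  ∑ j ∈ Finset.range n, ∑' m : ℕ,
    iteratedDeriv j f (trunc π 𝒯 x m) / (((j + 1).factorial : ℕ) : K) *
      (trunc π 𝒯 x (m + 1) - trunc π 𝒯 x m) ^ (j + 1)

/-- `Pₙ ∘ Pₙ₋₁ ∘ ⋯ ∘ P₁`. -/
def Tnaux : ℕ → (K → K) → K → K
  | 0, f => f
  | n + 1, f => Pn π 𝒯 (n + 1) (Tnaux n f)


set_option linter.unusedSectionVars false
set_option maxHeartbeats 1000000

section Sym

variable (f : K → K)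

@[simp] lemma cons_one {n} (c : K) (t : Fin (n + 1) → K) :
    (Fin.cons c t : Fin (n + 2) → K) 1 = t 0 := by
  rw [← Fin.succ_zero_eq_one, Fin.cons_succ]

lemma phi_expand1 {n} (c : K) (t : Fin (n + 1) → K) :
    Phi f (n + 1) (Fin.cons c t) =
      (Phi f n (Fin.cons c fun j => t j.succ) -
        Phi f n (Fin.cons (t 0) fun j => t j.succ)) / (c - t 0) := by
  simp only [Phi, Fin.cons_zero, Fin.cons_succ, cons_one]

lemma phi_expand2 {n} (y : Fin (n + 3) → K) :
    Phi f (n + 2) y =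
      ((Phi f n (Fin.cons (y 0) fun i => y i.succ.succ.succ) -
        Phi f n (Fin.cons (y 2) fun i => y i.succ.succ.succ)) / (y 0 - y 2) -
       (Phi f n (Fin.cons (y 1) fun i => y i.succ.succ.succ) -
        Phi f n (Fin.cons (y 2) fun i => y i.succ.succ.succ)) / (y 1 - y 2)) /
      (y 0 - y 1) := by
  have h2 : (0 : Fin (n + 1)).succ.succ = (2 : Fin (n + 3)) := by
    rw [Fin.succ_zero_eq_one, Fin.succ_one_eq_two]
  simp only [Phi, Fin.cons_zero, Fin.cons_succ, cons_one, h2]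

/-- lift of a permutation of `Fin n` to `Fin (n+1)`, fixing `0`. -/
def lift1 {n : ℕ} (τ : Equiv.Perm (Fin n)) : Equiv.Perm (Fin (n + 1)) where
  toFun := Fin.cases 0 (fun i => (τ i).succ)
  invFun := Fin.cases 0 (fun i => (τ.symm i).succ)
  left_inv j := by cases j using Fin.cases <;> simp
  right_inv j := by cases j using Fin.cases <;> simp

@[simp] lemma lift1_zero {n} (τ : Equiv.Perm (Fin n)) : lift1 τ 0 = 0 := rfl

@[simp] lemma lift1_succ {n} (τ : Equiv.Perm (Fin n)) (i : Fin n) :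
    lift1 τ i.succ = (τ i).succ := by
  simp [lift1]

lemma cons_comp_lift1 {n} (a : K) (z : Fin n → K) (τ : Equiv.Perm (Fin n)) :
    (Fin.cons a z : Fin (n+1) → K) ∘ (lift1 τ) = Fin.cons a (z ∘ τ) := by
  funext j
  cases j using Fin.cases <;> simp

lemma succ_succ_ne_zero {n} (i : Fin n) : i.succ.succ ≠ (0 : Fin (n + 2)) :=
  Fin.succ_ne_zero _

lemma succ_succ_ne_one {n} (i : Fin n) : i.succ.succ ≠ (1 : Fin (n + 2)) := by
  rw [← Fin.succ_zero_eq_one]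
  exact fun h => Fin.succ_ne_zero _ (Fin.succ_injective _ h)

lemma sss_ne_two {n} (i : Fin n) : i.succ.succ.succ ≠ (2 : Fin (n + 3)) := by
  rw [← Fin.succ_one_eq_two]
  exact fun h => succ_succ_ne_one i (Fin.succ_injective _ h)

lemma zero_ne_two {n} : (0 : Fin (n + 3)) ≠ 2 := by
  rw [← Fin.succ_one_eq_two]
  exact (Fin.succ_ne_zero _).symm

lemma one_ne_two {n} : (1 : Fin (n + 3)) ≠ 2 := by
  rw [← Fin.succ_one_eq_two, ← Fin.succ_zero_eq_one]
  intro h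
  have := Fin.succ_injective _ h
  rw [← Fin.succ_zero_eq_one] at this
  exact Fin.succ_ne_zero _ this.symm

lemma phi_swap01 {n} (x : Fin (n + 2) → K) :
    Phi f (n + 1) (x ∘ Equiv.swap 0 1) = Phi f (n + 1) x := by
  have h0 : (x ∘ Equiv.swap 0 1) 0 = x 1 := by simp
  have h1 : (x ∘ Equiv.swap 0 1) 1 = x 0 := by simp
  have ht : (fun i : Fin n => (x ∘ Equiv.swap 0 1) i.succ.succ) =
      fun i => x i.succ.succ := by
    funext i
    simp [Equiv.swap_apply_of_ne_of_ne (succ_succ_ne_zero i) (succ_succ_ne_one i)]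
  simp only [Phi, h0, h1, ht]
  rw [← neg_sub (x 0) (x 1), ← neg_sub (Phi f n _) (Phi f n _), neg_div_neg_eq]

lemma phi_swap12 {n} (x : Fin (n + 3) → K) (hx : Function.Injective x) :
    Phi f (n + 2) (x ∘ Equiv.swap 1 2) = Phi f (n + 2) x := by
  have e0 : (x ∘ Equiv.swap 1 2) 0 = x 0 := by
    simp [Equiv.swap_apply_of_ne_of_ne Fin.zero_ne_one zero_ne_two]
  have e1 : (x ∘ Equiv.swap 1 2) 1 = x 2 := by simp
  have e2 : (x ∘ Equiv.swap 1 2) 2 = x 1 := by simp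
  have et : (fun i : Fin n => (x ∘ Equiv.swap 1 2) i.succ.succ.succ) =
      fun i => x i.succ.succ.succ := by
    funext i
    have := Equiv.swap_apply_of_ne_of_ne (succ_succ_ne_one (i.succ)) (sss_ne_two i)
    simp [this]
  rw [phi_expand2, phi_expand2, e0, e1, e2, et]
  have d01 : x 0 - x 1 ≠ 0 := sub_ne_zero.mpr (fun h => Fin.zero_ne_one (hx h))
  have d02 : x 0 - x 2 ≠ 0 := sub_ne_zero.mpr (fun h => zero_ne_two (hx h))
  have d12 : x 1 - x 2 ≠ 0 := sub_ne_zero.mpr (fun h => one_ne_two (hx h))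
  have d10 : x 1 - x 0 ≠ 0 := sub_ne_zero.mpr (fun h => Fin.zero_ne_one (hx h).symm)
  have d20 : x 2 - x 0 ≠ 0 := sub_ne_zero.mpr (fun h => zero_ne_two (hx h).symm)
  have d21 : x 2 - x 1 ≠ 0 := sub_ne_zero.mpr (fun h => one_ne_two (hx h).symm)
  field_simp
  ring

lemma tail_injective {n} {x : Fin (n + 2) → K} (hx : Function.Injective x) :
    Function.Injective fun i : Fin n => x i.succ.succ :=
  hx.comp ((Fin.succ_injective _).comp (Fin.succ_injective _))

lemma cons_head_tail_injective {n} {x : Fin (n + 2) → K} (hx : Function.Injective x)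
    (c : Fin (n + 2)) (hc : ∀ i : Fin n, c ≠ i.succ.succ) :
    Function.Injective (Fin.cons (x c) (fun i => x i.succ.succ) : Fin (n + 1) → K) := by
  rw [Fin.cons_injective_iff]
  refine ⟨?_, tail_injective hx⟩
  rintro ⟨i, hi⟩
  exact hc i (hx hi.symm)

/-- invariance of `Φ` under permutations of the tail, given symmetry at level `n`. -/
lemma phi_tailPerm {n} (x : Fin (n + 2) → K)
    (ih : ∀ (y : Fin (n + 1) → K), Function.Injective y →
      ∀ τ : Equiv.Perm (Fin (n + 1)), Phi f n (y ∘ τ) = Phi f n y)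
    (hx : Function.Injective x) (τ : Equiv.Perm (Fin n)) :
    Phi f (n + 1) (x ∘ lift1 (lift1 τ)) = Phi f (n + 1) x := by
  have h0 : (x ∘ lift1 (lift1 τ)) 0 = x 0 := by simp
  have h1 : (x ∘ lift1 (lift1 τ)) 1 = x 1 := by
    have : lift1 (lift1 τ) (1 : Fin (n + 2)) = 1 := by
      rw [← Fin.succ_zero_eq_one, lift1_succ, lift1_zero]
    simp [this]
  have ht : (fun i : Fin n => (x ∘ lift1 (lift1 τ)) i.succ.succ) =
      (fun i : Fin n => x i.succ.succ) ∘ τ := by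
    funext i
    show x (lift1 (lift1 τ) i.succ.succ) = x ((τ i).succ.succ)
    rw [lift1_succ, lift1_succ]
  simp only [Phi, h0, h1, ht]
  have hA : Function.Injective (Fin.cons (x 0) (fun i => x i.succ.succ) : Fin (n+1) → K) :=
    cons_head_tail_injective hx 0 (fun i => (succ_succ_ne_zero i).symm)
  have hB : Function.Injective (Fin.cons (x 1) (fun i => x i.succ.succ) : Fin (n+1) → K) :=
    cons_head_tail_injective hx 1 (fun i => (succ_succ_ne_one i).symm)
  rw [← cons_comp_lift1, ← cons_comp_lift1, ih _ hA, ih _ hB]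

lemma lift1_inv {n} (τ : Equiv.Perm (Fin n)) : (lift1 τ)⁻¹ = lift1 τ⁻¹ := rfl

lemma swap_succ {m} (i j k : Fin m) :
    Equiv.swap i.succ j.succ k.succ = (Equiv.swap i j k).succ := by
  rcases eq_or_ne k i with rfl | hki
  · simp
  rcases eq_or_ne k j with rfl | hkj
  · simp
  rw [Equiv.swap_apply_of_ne_of_ne (fun h => hki (Fin.succ_injective _ h))
      (fun h => hkj (Fin.succ_injective _ h)),
    Equiv.swap_apply_of_ne_of_ne hki hkj]

lemma lift2_swap {n} (i j : Fin n) :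
    (lift1 (lift1 (Equiv.swap i j)) : Equiv.Perm (Fin (n + 2))) =
      Equiv.swap i.succ.succ j.succ.succ := by
  refine Equiv.ext fun k => ?_
  cases k using Fin.cases with
  | zero =>
    rw [Equiv.swap_apply_of_ne_of_ne (Ne.symm (succ_succ_ne_zero i))
      (Ne.symm (succ_succ_ne_zero j))]
    rfl
  | succ k1 =>
    cases k1 using Fin.cases with
    | zero =>
      have h1 : (0 : Fin (n + 1)).succ ≠ i.succ.succ :=
        fun h => Fin.succ_ne_zero _ (Fin.succ_injective _ h).symm
      have h2 : (0 : Fin (n + 1)).succ ≠ j.succ.succ :=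
        fun h => Fin.succ_ne_zero _ (Fin.succ_injective _ h).symm
      rw [Equiv.swap_apply_of_ne_of_ne h1 h2]
      rfl
    | succ k =>
      show lift1 (lift1 (Equiv.swap i j)) k.succ.succ = _
      rw [lift1_succ, lift1_succ, swap_succ, swap_succ]

theorem phi_perm (f : K → K) : ∀ (n : ℕ) (x : Fin (n + 1) → K), Function.Injective x →
    ∀ σ : Equiv.Perm (Fin (n + 1)), Phi f n (x ∘ σ) = Phi f n x := by
  intro n
  induction n with
  | zero =>
    intro x hx σ
    have : x ∘ σ = x := by
      funext i
      exact congrArg x (@Subsingleton.elim _ Fin.subsingleton_one _ _)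
    rw [this]
  | succ n ih =>
    suffices hswap : ∀ (i j : Fin (n + 2)), i ≠ j → ∀ x : Fin (n + 2) → K,
        Function.Injective x → Phi f (n + 1) (x ∘ Equiv.swap i j) = Phi f (n + 1) x by
      intro x hx σ
      revert x hx
      refine Equiv.Perm.swap_induction_on σ (fun x hx => rfl)
        (fun σ' a b hab ihσ' x hx => ?_)
      have hc : x ∘ ⇑(Equiv.swap a b * σ') = (x ∘ Equiv.swap a b) ∘ ⇑σ' := rfl
      rw [hc, ihσ' _ (hx.comp (Equiv.swap a b).injective), hswap a b hab x hx]
    -- now prove invariance under swaps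
    cases n with
    | zero =>
      -- tuples of length 2
      intro i j hij x hx
      have hs : Equiv.swap i j = Equiv.swap 0 1 := by
        rcases Fin.exists_fin_two.mp ⟨i, rfl⟩ with hi | hi
        all_goals rcases Fin.exists_fin_two.mp ⟨j, rfl⟩ with hj | hj
        all_goals subst hi; subst hj
        · exact absurd rfl hij
        · rfl
        · exact Equiv.swap_comm _ _
        · exact absurd rfl hij
      rw [hs]
      exact phi_swap01 f x
    | succ n =>
      -- tuples of length n+3
      have Htail : ∀ (i j : Fin (n + 1)), i ≠ j → ∀ x : Fin (n + 3) → K,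
          Function.Injective x →
          Phi f (n + 2) (x ∘ Equiv.swap i.succ.succ j.succ.succ) = Phi f (n + 2) x := by
        intro i j hij x hx
        rw [← lift2_swap]
        exact phi_tailPerm f x ih hx (Equiv.swap i j)
      have Q1j : ∀ (i : Fin (n + 1)) (x : Fin (n + 3) → K), Function.Injective x →
          Phi f (n + 2) (x ∘ Equiv.swap 1 i.succ.succ) = Phi f (n + 2) x := by
        intro i x hx
        cases i using Fin.cases with
        | zero =>
          have h2 : (0 : Fin (n + 1)).succ.succ = (2 : Fin (n + 3)) := by
            rw [Fin.succ_zero_eq_one, Fin.succ_one_eq_two]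
          rw [h2]
          exact phi_swap12 f x hx
        | succ d =>
          set σ : Equiv.Perm (Fin (n + 3)) := lift1 (lift1 (Equiv.swap 0 d.succ)) with hσdef
          have hσ1 : σ 1 = 1 := by
            rw [← Fin.succ_zero_eq_one]
            show lift1 (lift1 (Equiv.swap 0 d.succ)) (Fin.succ 0) = Fin.succ 0
            rw [lift1_succ, lift1_zero]
          have hσ2 : σ 2 = d.succ.succ.succ := by
            have h2 : (2 : Fin (n + 3)) = (0 : Fin (n + 1)).succ.succ := by
              rw [Fin.succ_zero_eq_one, Fin.succ_one_eq_two]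
            rw [h2]
            show lift1 (lift1 (Equiv.swap 0 d.succ)) (0 : Fin (n+1)).succ.succ
              = d.succ.succ.succ
            rw [lift1_succ, lift1_succ, Equiv.swap_apply_left]
          have key : Equiv.swap (1 : Fin (n + 3)) d.succ.succ.succ =
              σ * Equiv.swap 1 2 * σ⁻¹ := by
            conv_lhs => rw [← hσ1, ← hσ2]
            rw [Equiv.swap_apply_apply]
          have hcomp : x ∘ ⇑(Equiv.swap (1 : Fin (n + 3)) d.succ.succ.succ) =
              (((x ∘ σ) ∘ Equiv.swap 1 2) ∘ ⇑σ⁻¹) := by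
            rw [key]; rfl
          rw [hcomp]
          have hσinv : σ⁻¹ = lift1 (lift1 (Equiv.swap 0 d.succ)) := by
            rw [hσdef, lift1_inv, lift1_inv, Equiv.swap_inv]
          rw [hσinv]
          have hinj1 : Function.Injective (x ∘ σ) := hx.comp σ.injective
          have hinj2 : Function.Injective ((x ∘ σ) ∘ Equiv.swap 1 2) :=
            hinj1.comp (Equiv.swap 1 2).injective
          rw [phi_tailPerm f _ ih hinj2 (Equiv.swap 0 d.succ),
            phi_swap12 f _ hinj1,
            phi_tailPerm f _ ih hx (Equiv.swap 0 d.succ)]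
      have Q0j : ∀ (i : Fin (n + 1)) (x : Fin (n + 3) → K), Function.Injective x →
          Phi f (n + 2) (x ∘ Equiv.swap 0 i.succ.succ) = Phi f (n + 2) x := by
        intro i x hx
        have hρ1 : Equiv.swap (0 : Fin (n + 3)) 1 1 = 0 := Equiv.swap_apply_right _ _
        have hρi : Equiv.swap (0 : Fin (n + 3)) 1 i.succ.succ = i.succ.succ :=
          Equiv.swap_apply_of_ne_of_ne (succ_succ_ne_zero i) (succ_succ_ne_one i)
        have key : Equiv.swap (0 : Fin (n + 3)) i.succ.succ =
            Equiv.swap 0 1 * Equiv.swap 1 i.succ.succ * (Equiv.swap 0 1)⁻¹ := by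
          conv_lhs => rw [← hρ1, ← hρi]
          rw [Equiv.swap_apply_apply]
        have hcomp : x ∘ ⇑(Equiv.swap (0 : Fin (n + 3)) i.succ.succ) =
            (((x ∘ Equiv.swap 0 1) ∘ Equiv.swap 1 i.succ.succ) ∘ ⇑(Equiv.swap 0 1)) := by
          rw [key, Equiv.swap_inv]; rfl
        rw [hcomp]
        have hinj1 : Function.Injective (x ∘ Equiv.swap 0 1) :=
          hx.comp (Equiv.swap 0 1).injective
        have hinj2 : Function.Injective ((x ∘ Equiv.swap 0 1) ∘ Equiv.swap 1 i.succ.succ) :=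
          hinj1.comp (Equiv.swap 1 i.succ.succ).injective
        rw [phi_swap01 f _, Q1j i _ hinj1, phi_swap01 f x]
      -- assemble
      intro i j hij x hx
      have symmQ : ∀ a b : Fin (n + 3), (∀ y : Fin (n + 3) → K, Function.Injective y →
          Phi f (n + 2) (y ∘ Equiv.swap a b) = Phi f (n + 2) y) →
          Phi f (n + 2) (x ∘ Equiv.swap b a) = Phi f (n + 2) x := by
        intro a b h
        rw [Equiv.swap_comm]
        exact h x hx
      cases i using Fin.cases with
      | zero =>
        cases j using Fin.cases with
        | zero => exact absurd rfl hij
        | succ j1 =>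
          cases j1 using Fin.cases with
          | zero =>
            rw [Fin.succ_zero_eq_one]
            exact phi_swap01 f x
          | succ j2 => exact Q0j j2 x hx
      | succ i1 =>
        cases i1 using Fin.cases with
        | zero =>
          rw [Fin.succ_zero_eq_one]
          cases j using Fin.cases with
          | zero => exact symmQ 0 1 (fun y hy => phi_swap01 f y)
          | succ j1 =>
            cases j1 using Fin.cases with
            | zero => exact absurd rfl hij
            | succ j2 => exact Q1j j2 x hx
        | succ i2 =>
          cases j using Fin.cases with
          | zero => exact symmQ 0 i2.succ.succ (Q0j i2)
          | succ j1 =>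
            cases j1 using Fin.cases with
            | zero =>
              rw [Fin.succ_zero_eq_one]
              exact symmQ 1 i2.succ.succ (Q1j i2)
            | succ j2 =>
              refine Htail i2 j2 (fun h => hij ?_) x hx
              rw [h]

end Sym

section Update

variable (f : K → K)

lemma cons_cons_inj_facts {n} {a b : K} {z : Fin n → K}
    (h : Function.Injective (Fin.cons a (Fin.cons b z) : Fin (n + 2) → K)) :
    Function.Injective (Fin.cons a z : Fin (n + 1) → K) ∧
      Function.Injective (Fin.cons b z : Fin (n + 1) → K) ∧ a ≠ b := by
  rw [Fin.cons_injective_iff] at h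
  obtain ⟨ha, hbz⟩ := h
  rw [Fin.range_cons] at ha
  rw [Fin.cons_injective_iff] at hbz
  obtain ⟨hb, hz⟩ := hbz
  refine ⟨?_, ?_, ?_⟩
  · rw [Fin.cons_injective_iff]
    exact ⟨fun hr => ha (Set.mem_insert_iff.mpr (Or.inr hr)), hz⟩
  · rw [Fin.cons_injective_iff]
    exact ⟨hb, hz⟩
  · exact fun hr => ha (Set.mem_insert_iff.mpr (Or.inl hr))

lemma phi_insert {n} (a b : K) (z : Fin n → K) (hab : a ≠ b) :
    Phi f n (Fin.cons a z) - Phi f n (Fin.cons b z) =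
      (a - b) * Phi f (n + 1) (Fin.cons a (Fin.cons b z)) := by
  have h0 : (Fin.cons a (Fin.cons b z) : Fin (n + 2) → K) 0 = a := rfl
  have h1 : (Fin.cons a (Fin.cons b z) : Fin (n + 2) → K) 1 = b := by
    rw [cons_one, Fin.cons_zero]
  have ht : (fun i : Fin n => (Fin.cons a (Fin.cons b z) : Fin (n + 2) → K) i.succ.succ)
      = z := by
    funext i
    rw [Fin.cons_succ, Fin.cons_succ]
  conv_rhs => rw [show Phi f (n+1) (Fin.cons a (Fin.cons b z)) =
    (Phi f n (Fin.cons ((Fin.cons a (Fin.cons b z) : Fin (n+2) → K) 0)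
        fun i => (Fin.cons a (Fin.cons b z) : Fin (n+2) → K) i.succ.succ) -
      Phi f n (Fin.cons ((Fin.cons a (Fin.cons b z) : Fin (n+2) → K) 1)
        fun i => (Fin.cons a (Fin.cons b z) : Fin (n+2) → K) i.succ.succ)) /
      ((Fin.cons a (Fin.cons b z) : Fin (n+2) → K) 0 -
        (Fin.cons a (Fin.cons b z) : Fin (n+2) → K) 1) from rfl]
  rw [h0, h1, ht, mul_div_cancel₀ _ (sub_ne_zero.mpr hab)]

/-- The permutation moving position `k` to the front. -/
def toFront {n : ℕ} (k : Fin (n + 1)) : Equiv.Perm (Fin (n + 1)) :=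
  (finSuccEquiv' k).trans (finSuccEquiv' 0).symm

lemma cons_comp_toFront {n} (k : Fin (n + 1)) (c : K) (z : Fin n → K) :
    (Fin.cons c z : Fin (n + 1) → K) ∘ (toFront k) = Fin.insertNth k c z := by
  funext j
  refine Fin.succAboveCases (α := fun j =>
    ((Fin.cons c z : Fin (n + 1) → K) ∘ (toFront k)) j
      = Fin.insertNth (α := fun _ => K) k c z j) k ?_ ?_ j
  · show (Fin.cons c z : Fin (n + 1) → K) (toFront k k)
      = Fin.insertNth (α := fun _ => K) k c z k
    have h : toFront k k = 0 := by
      simp [toFront]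
    rw [h, Fin.cons_zero, Fin.insertNth_apply_same]
  · intro i
    show (Fin.cons c z : Fin (n + 1) → K) (toFront k (k.succAbove i))
      = Fin.insertNth (α := fun _ => K) k c z (k.succAbove i)
    have h : toFront k (k.succAbove i) = i.succ := by
      simp [toFront]
    rw [h, Fin.cons_succ, Fin.insertNth_apply_succAbove]

lemma phi_update {n} (x : Fin (n + 1) → K) (k : Fin (n + 1)) (a b : K)
    (hinj : Function.Injective (Fin.cons a (Fin.cons b (k.removeNth x)) : Fin (n + 2) → K)) :
    Phi f n (Function.update x k a) - Phi f n (Function.update x k b) =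
      (a - b) * Phi f (n + 1) (Fin.cons a (Fin.cons b (k.removeNth x))) := by
  obtain ⟨hA, hB, hab⟩ := cons_cons_inj_facts hinj
  have hupd : ∀ c : K, Function.update x k c =
      (Fin.cons c (k.removeNth x) : Fin (n + 1) → K) ∘ (toFront k) := by
    intro c
    rw [cons_comp_toFront, Fin.insertNth_removeNth]
  rw [hupd a, hupd b, phi_perm f n _ hA (toFront k), phi_perm f n _ hB (toFront k)]
  exact phi_insert f a b _ hab

end Update


section LocalField

variable {π : K} {𝒯 : Set K} {q : ℕ}

lemma norm_pi_pos (hK : LocalFieldData π 𝒯 q) : 0 < ‖π‖ := by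
  rw [hK.norm_pi]
  have : (0 : ℝ) < q := by exact_mod_cast Nat.lt_of_lt_of_le Nat.zero_lt_one hK.one_lt_q.le
  positivity

lemma norm_pi_lt_one (hK : LocalFieldData π 𝒯 q) : ‖π‖ < 1 := by
  rw [hK.norm_pi]
  have h1 : (1 : ℝ) < q := by exact_mod_cast hK.one_lt_q
  rw [inv_lt_one_iff₀]
  right; exact h1

lemma small_norm (hK : LocalFieldData π 𝒯 q) {y : K} (h : ‖y‖ < 1) : ‖y‖ ≤ ‖π‖ := by
  rcases eq_or_ne y 0 with rfl | hy
  · simpa using (norm_pi_pos hK).le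
  obtain ⟨k, hk⟩ := hK.norm_discrete y hy
  rw [hk] at h ⊢
  have h0 := norm_pi_pos hK
  have h1 := norm_pi_lt_one hK
  have hk1 : 1 ≤ k := by
    by_contra hcon
    push_neg at hcon
    have : k ≤ 0 := by omega
    have := zpow_le_zpow_right_of_le_one₀ h0 h1.le this
    simp only [zpow_zero] at this
    exact absurd h (not_lt.mpr this)
  have := zpow_le_zpow_right_of_le_one₀ h0 h1.le hk1
  simpa using this

lemma exists_trunc (hK : LocalFieldData π 𝒯 q) :
    ∀ (m : ℕ) (x : K), ‖x‖ ≤ 1 → ∃ r ∈ Rm π 𝒯 m, ‖x - r‖ ≤ ‖π‖ ^ m := by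
  intro m
  induction m with
  | zero =>
    intro x hx
    exact ⟨0, ⟨fun i => i.elim0, fun i => i.elim0, by simp⟩, by simpa using hx⟩
  | succ m ih =>
    intro x hx
    obtain ⟨r, ⟨a, ha, hsum⟩, hr⟩ := ih x hx
    have hπne : (π : K) ≠ 0 := norm_pos_iff.mp (norm_pi_pos hK)
    have hπm : (π : K) ^ m ≠ 0 := pow_ne_zero _ hπne
    set y := (x - r) / π ^ m with hy
    have hy1 : ‖y‖ ≤ 1 := by
      rw [hy, norm_div, norm_pow]
      rw [div_le_one (pow_pos (norm_pi_pos hK) m)]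
      simpa using hr
    obtain ⟨t, ⟨ht, hyt⟩, _⟩ := hK.rep_unique y hy1
    have hytπ : ‖y - t‖ ≤ ‖π‖ := small_norm hK hyt
    refine ⟨r + t * π ^ m, ⟨Fin.snoc a t, ?_, ?_⟩, ?_⟩
    · intro i
      cases i using Fin.lastCases with
      | last => rw [Fin.snoc_last]; exact ht
      | cast j => rw [Fin.snoc_castSucc]; exact ha j
    · rw [Fin.sum_univ_castSucc]
      simp only [Fin.snoc_castSucc, Fin.snoc_last, Fin.coe_castSucc, Fin.val_last]
      rw [← hsum]
    · have hxr : x - (r + t * π ^ m) = (y - t) * π ^ m := by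
        rw [hy]
        field_simp
        ring
      rw [hxr, norm_mul, norm_pow]
      calc ‖y - t‖ * ‖π‖ ^ m ≤ ‖π‖ * ‖π‖ ^ m :=
            mul_le_mul_of_nonneg_right hytπ (pow_nonneg (norm_nonneg _) _)
      _ = ‖π‖ ^ (m + 1) := by ring

lemma Rm_finite (hK : LocalFieldData π 𝒯 q) (m : ℕ) : (Rm π 𝒯 m).Finite := by
  have hsub : Rm π 𝒯 m ⊆
      (fun a : Fin m → K => ∑ i, a i * π ^ (i : ℕ)) '' (Set.pi Set.univ fun _ => 𝒯) := by
    rintro x ⟨a, ha, rfl⟩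
    exact ⟨a, fun i _ => ha i, rfl⟩
  exact ((Set.Finite.pi fun _ => hK.finite_rep).image _).subset hsub

lemma Rint_isCompact (hK : LocalFieldData π 𝒯 q) : IsCompact (Rint K) := by
  refine TotallyBounded.isCompact_of_isClosed ?_ ?_
  · rw [Metric.totallyBounded_iff]
    intro ε hε
    obtain ⟨m, hm⟩ := exists_pow_lt_of_lt_one hε (norm_pi_lt_one hK)
    refine ⟨Rm π 𝒯 m, Rm_finite hK m, fun x hx => ?_⟩
    obtain ⟨r, hrm, hr⟩ := exists_trunc hK m x hx
    exact Set.mem_biUnion hrm (by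
      rw [Metric.mem_ball, dist_eq_norm]
      exact lt_of_le_of_lt hr hm)
  · have : Rint K = norm ⁻¹' Set.Iic 1 := rfl
    rw [this]
    exact IsClosed.preimage continuous_norm isClosed_Iic

lemma exists_avoid (hK : LocalFieldData π 𝒯 q) (s : Finset K) (x : K) (hx : ‖x‖ ≤ 1)
    {ε : ℝ} (hε : 0 < ε) : ∃ y : K, y ∉ s ∧ ‖y - x‖ < ε ∧ ‖y‖ ≤ 1 := by
  obtain ⟨k, hk⟩ := exists_pow_lt_of_lt_one hε (norm_pi_lt_one hK)
  have h0 := norm_pi_pos hK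
  have h1 := norm_pi_lt_one hK
  have hinj : Function.Injective (fun j : ℕ => x + π ^ (k + j)) := by
    intro a b hab
    simp only [add_right_inj] at hab
    have hnorm : ‖π‖ ^ (k + a) = ‖π‖ ^ (k + b) := by rw [← norm_pow, ← norm_pow, hab]
    by_contra hne
    rcases Nat.lt_or_ge a b with h | h
    · exact absurd hnorm (ne_of_gt (pow_lt_pow_right_of_lt_one₀ h0 h1 (by omega)))
    · have : a ≠ b := hne
      exact absurd hnorm.symm (ne_of_gt (pow_lt_pow_right_of_lt_one₀ h0 h1 (by omega)))
  have hns : ¬ (Set.range (fun j : ℕ => x + π ^ (k + j)) ⊆ ↑s) := fun hsub =>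
    (Set.infinite_range_of_injective hinj) (s.finite_toSet.subset hsub)
  obtain ⟨y, ⟨j, rfl⟩, hj⟩ := Set.not_subset.mp hns
  refine ⟨x + π ^ (k + j), by simpa using hj, ?_, ?_⟩
  · have : x + π ^ (k + j) - x = π ^ (k + j) := by ring
    rw [this, norm_pow]
    calc ‖π‖ ^ (k + j) ≤ ‖π‖ ^ k := pow_le_pow_of_le_one h0.le h1.le (by omega)
    _ < ε := hk
  · refine (IsUltrametricDist.norm_add_le_max x _).trans (max_le hx ?_)
    rw [norm_pow]
    exact pow_le_one₀ h0.le h1.le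

lemma exists_tuple_perturb (hK : LocalFieldData π 𝒯 q) :
    ∀ (m : ℕ) (x : Fin m → K) (s : Finset K) {ε : ℝ}, 0 < ε → (∀ i, ‖x i‖ ≤ 1) →
      ∃ y : Fin m → K, Function.Injective y ∧ (∀ i, ‖y i‖ ≤ 1) ∧
        (∀ i, ‖y i - x i‖ < ε) ∧ ∀ i, y i ∉ s := by
  classical
  intro m
  induction m with
  | zero =>
    intro x s ε hε hx
    exact ⟨fun i => i.elim0, fun i => i.elim0, fun i => i.elim0,
      fun i => i.elim0, fun i => i.elim0⟩
  | succ m ih =>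
    intro x s ε hε hx
    obtain ⟨yt, hytinj, hyt1, hytε, hyts⟩ := ih (fun i => x i.succ) s hε (fun i => hx i.succ)
    obtain ⟨y0, hy0s, hy0ε, hy01⟩ :=
      exists_avoid hK (s ∪ Finset.image yt Finset.univ) (x 0) (hx 0) hε
    refine ⟨Fin.cons y0 yt, ?_, ?_, ?_, ?_⟩
    · rw [Fin.cons_injective_iff]
      refine ⟨?_, hytinj⟩
      rintro ⟨i, hi⟩
      exact hy0s (Finset.mem_union_right _ (Finset.mem_image.mpr ⟨i, Finset.mem_univ i, hi⟩))
    · intro i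
      cases i using Fin.cases with
      | zero => simpa using hy01
      | succ i => simpa using hyt1 i
    · intro i
      cases i using Fin.cases with
      | zero => simpa using hy0ε
      | succ i => simpa using hytε i
    · intro i
      cases i using Fin.cases with
      | zero => simp only [Fin.cons_zero]; exact fun h => hy0s (Finset.mem_union_left _ h)
      | succ i => simpa using hyts i

end LocalField


section Path

variable (f : K → K)

lemma path_est {m : ℕ} {M δ : ℝ} (hM0 : 0 ≤ M) (hδ : 0 ≤ δ)
    (hbound : ∀ y ∈ nabla K (m + 2), ‖Phi f (m + 1) y‖ ≤ M)
    (u w : Fin (m + 1) → K) (hu : u ∈ nabla K (m + 1)) (hw : w ∈ nabla K (m + 1))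
    (hdisj : ∀ i j, w i ≠ u j) (hclose : ∀ i, ‖u i - w i‖ ≤ δ) :
    ‖Phi f m u - Phi f m w‖ ≤ M * δ := by
  obtain ⟨hu1, huinj⟩ := hu
  obtain ⟨hw1, hwinj⟩ := hw
  set mix : ℕ → Fin (m + 1) → K := fun k i => if (i : ℕ) < k then w i else u i with hmix
  have hmix0 : mix 0 = u := by
    funext i
    simp [hmix]
  have hmixlast : mix (m + 1) = w := by
    funext i
    simp [hmix, i.isLt]
  have hmixmem : ∀ k i, mix k i = w i ∨ mix k i = u i := by
    intro k i
    by_cases h : (i : ℕ) < k <;> simp [hmix, h]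
  have hmixinj : ∀ k, Function.Injective (mix k) := by
    intro k a b hab
    rcases hmixmem k a with h1 | h1 <;> rcases hmixmem k b with h2 | h2 <;>
      rw [h1, h2] at hab
    · exact hwinj hab
    · exact absurd hab (hdisj a b)
    · exact absurd hab.symm (hdisj b a)
    · exact huinj hab
  have hmix1 : ∀ k i, ‖mix k i‖ ≤ 1 := by
    intro k i
    rcases hmixmem k i with h | h <;> rw [h]
    exacts [hw1 i, hu1 i]
  have step : ∀ k : ℕ, k ≤ m →
      ‖Phi f m (mix k) - Phi f m (mix (k + 1))‖ ≤ M * δ := by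
    intro k hk
    set kF : Fin (m + 1) := ⟨k, by omega⟩ with hkF
    have hmem : mix k kF = u kF := by
      simp [hmix, hkF]
    have hupd1 : mix k = Function.update (mix k) kF (u kF) := by
      rw [← hmem, Function.update_eq_self]
    have hupd2 : mix (k + 1) = Function.update (mix k) kF (w kF) := by
      funext i
      rcases eq_or_ne i kF with rfl | hne
      · simp [hmix, hkF]
      · rw [Function.update_of_ne hne]
        have hval : (i : ℕ) ≠ k := fun h => hne (Fin.ext (by simp [hkF, h]))
        have : (i : ℕ) < k + 1 ↔ (i : ℕ) < k := by omega
        simp [hmix, this]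
    rcases eq_or_ne (u kF) (w kF) with heq | hne
    · rw [hupd2, ← heq, ← hupd1, sub_self, norm_zero]
      positivity
    -- the inserted tuple
    set Y : Fin (m + 2) → K :=
      Fin.cons (u kF) (Fin.cons (w kF) (kF.removeNth (mix k))) with hY
    have hYinj : Function.Injective Y := by
      rw [hY, Fin.cons_injective_iff, Fin.cons_injective_iff]
      have hrem : ∀ j, ∃ i, i ≠ kF ∧ kF.removeNth (mix k) j = mix k i := by
        intro j
        exact ⟨kF.succAbove j, Fin.succAbove_ne kF j, rfl⟩
      refine ⟨?_, ?_, ?_⟩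
      · rintro ⟨j, hj⟩
        rcases hj with hj
        rcases eq_or_ne j 0 with rfl | hj0
        · rw [Fin.cons_zero] at hj
          exact hne hj.symm
        · obtain ⟨j', rfl⟩ := Fin.exists_succ_eq.mpr hj0
          rw [Fin.cons_succ] at hj
          obtain ⟨i, hik, hi⟩ := hrem j'
          rw [hi] at hj
          rcases hmixmem k i with h | h <;> rw [h] at hj
          · exact hdisj i kF hj
          · exact hik (huinj hj)
      · rintro ⟨j, hj⟩
        obtain ⟨i, hik, hi⟩ := hrem j
        rw [hi] at hj
        rcases hmixmem k i with h | h <;> rw [h] at hj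
        · exact hik (hwinj hj)
        · exact hdisj kF i hj.symm
      · intro a b hab
        have hab' : mix k (kF.succAbove a) = mix k (kF.succAbove b) := hab
        exact Fin.succAbove_right_injective (hmixinj k hab')
    have hYmem : Y ∈ nabla K (m + 2) := by
      refine ⟨?_, hYinj⟩
      intro i
      rcases eq_or_ne i 0 with rfl | hi0
      · rw [hY, Fin.cons_zero]; exact hu1 kF
      obtain ⟨i', rfl⟩ := Fin.exists_succ_eq.mpr hi0
      rw [hY, Fin.cons_succ]
      rcases eq_or_ne i' 0 with rfl | hi'0
      · rw [Fin.cons_zero]; exact hw1 kF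
      obtain ⟨i'', rfl⟩ := Fin.exists_succ_eq.mpr hi'0
      rw [Fin.cons_succ]
      exact hmix1 k _
    have hdiff := phi_update f (mix k) kF (u kF) (w kF) (by rw [← hY]; exact hYinj)
    rw [← hupd1, ← hupd2, ← hY] at hdiff
    rw [hdiff, norm_mul]
    have h1 : ‖u kF - w kF‖ ≤ δ := hclose kF
    have h2 : ‖Phi f (m + 1) Y‖ ≤ M := hbound Y hYmem
    calc ‖u kF - w kF‖ * ‖Phi f (m + 1) Y‖ ≤ δ * M := by
          exact mul_le_mul h1 h2 (norm_nonneg _) hδ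
    _ = M * δ := mul_comm _ _
  have tele : ∀ k : ℕ, k ≤ m + 1 → ‖Phi f m u - Phi f m (mix k)‖ ≤ M * δ := by
    intro k
    induction k with
    | zero =>
      intro _
      rw [hmix0, sub_self, norm_zero]
      positivity
    | succ k ih =>
      intro hk
      have h1 := ih (by omega)
      have h2 := step k (by omega)
      have : Phi f m u - Phi f m (mix (k + 1)) =
          (Phi f m u - Phi f m (mix k)) + (Phi f m (mix k) - Phi f m (mix (k + 1))) := by
        ring
      rw [this]
      exact (IsUltrametricDist.norm_add_le_max _ _).trans (max_le h1 h2)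
  have := tele (m + 1) le_rfl
  rwa [hmixlast] at this

lemma lipschitz_est {π : K} {𝒯 : Set K} {q : ℕ} (hK : LocalFieldData π 𝒯 q)
    {m : ℕ} {M : ℝ} (hM0 : 0 ≤ M)
    (hbound : ∀ y ∈ nabla K (m + 2), ‖Phi f (m + 1) y‖ ≤ M)
    (u v : Fin (m + 1) → K) (hu : u ∈ nabla K (m + 1)) (hv : v ∈ nabla K (m + 1)) :
    ‖Phi f m u - Phi f m v‖ ≤ M * dist u v := by
  classical
  rcases eq_or_ne u v with rfl | hne
  · rw [sub_self, norm_zero]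
    positivity
  set δ := dist u v with hδdef
  have hδ : 0 < δ := dist_pos.mpr hne
  obtain ⟨w, hwinj, hw1, hwε, hws⟩ := exists_tuple_perturb hK (m + 1) u
    (Finset.image u Finset.univ ∪ Finset.image v Finset.univ) hδ hu.1
  have hwmem : w ∈ nabla K (m + 1) := ⟨hw1, hwinj⟩
  have hdisju : ∀ i j, w i ≠ u j := by
    intro i j h
    exact hws i (Finset.mem_union_left _ (Finset.mem_image.mpr ⟨j, Finset.mem_univ j, h.symm⟩))
  have hdisjv : ∀ i j, w i ≠ v j := by
    intro i j h
    exact hws i (Finset.mem_union_right _ (Finset.mem_image.mpr ⟨j, Finset.mem_univ j, h.symm⟩))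
  have hcloseu : ∀ i, ‖u i - w i‖ ≤ δ := by
    intro i
    rw [norm_sub_rev]
    exact (hwε i).le
  have hclosev : ∀ i, ‖v i - w i‖ ≤ δ := by
    intro i
    have h1 : ‖v i - u i‖ ≤ δ := by
      rw [← dist_eq_norm]
      exact (dist_le_pi_dist v u i).trans (le_of_eq (dist_comm v u))
    have h2 : ‖u i - w i‖ ≤ δ := hcloseu i
    have : v i - w i = (v i - u i) + (u i - w i) := by ring
    rw [this]
    exact (IsUltrametricDist.norm_add_le_max _ _).trans (max_le h1 h2)
  have e1 : ‖Phi f m u - Phi f m w‖ ≤ M * δ :=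
    path_est f hM0 hδ.le hbound u w hu hwmem hdisju hcloseu
  have e2 : ‖Phi f m v - Phi f m w‖ ≤ M * δ :=
    path_est f hM0 hδ.le hbound v w hv hwmem hdisjv hclosev
  have : Phi f m u - Phi f m v = (Phi f m u - Phi f m w) + (Phi f m w - Phi f m v) := by
    ring
  rw [this]
  refine (IsUltrametricDist.norm_add_le_max _ _).trans (max_le e1 ?_)
  rw [norm_sub_rev]
  exact e2

end Path

/-- (1) Every `Cⁿ`-function is an `n`-th Lipschitz function; (2) every `n`-th Lipschitz
function is a `Cⁿ⁻¹`-function. -/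
theorem statement_18 (π : K) (𝒯 : Set K) (q : ℕ) (hK : LocalFieldData π 𝒯 q)
    (n : ℕ) (hn : 1 ≤ n) :
    (∀ f : K → K, IsCn f n →
      (⨆ x : nabla K (n + 1), (‖Phi f n ↑x‖₊ : ℝ≥0∞)) < ⊤) ∧
    (∀ f : K → K, ContinuousOn f (Rint K) →
      (⨆ x : nabla K (n + 1), (‖Phi f n ↑x‖₊ : ℝ≥0∞)) < ⊤ → IsCn f (n - 1)) := by
  constructor
  · -- Part 1
    rintro f ⟨g, hgc, hge⟩
    have hT : IsCompact {x : Fin (n + 1) → K | ∀ i, ‖x i‖ ≤ 1} := by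
      have heq : {x : Fin (n + 1) → K | ∀ i, ‖x i‖ ≤ 1} =
          Set.pi Set.univ (fun _ : Fin (n + 1) => Rint K) := by
        ext x
        simp [Set.mem_pi, Rint]
      rw [heq]
      exact isCompact_univ_pi fun _ => Rint_isCompact hK
    obtain ⟨C, hC⟩ := hT.exists_bound_of_continuousOn hgc
    refine lt_of_le_of_lt (iSup_le fun x => ?_) (ENNReal.ofReal_lt_top (r := C))
    rw [← hge _ x.2.1 x.2.2, ← enorm_eq_nnnorm, ← ofReal_norm]
    exact ENNReal.ofReal_le_ofReal (hC _ x.2.1)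
  · -- Part 2
    intro f _hf hsup
    obtain ⟨m, rfl⟩ : ∃ m, n = m + 1 := ⟨n - 1, (Nat.succ_pred_eq_of_pos hn).symm⟩
    have hgoal : IsCn f m := by
      classical
      set Msup := (⨆ x : nabla K (m + 1 + 1), (‖Phi f (m + 1) ↑x‖₊ : ℝ≥0∞)) with hMsup
      set M : ℝ≥0 := Msup.toNNReal with hMdef
      have hbound : ∀ y ∈ nabla K (m + 2), ‖Phi f (m + 1) y‖ ≤ (M : ℝ) := by
        intro y hy
        have h1 : (‖Phi f (m + 1) y‖₊ : ℝ≥0∞) ≤ Msup :=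
          le_iSup (fun x : nabla K (m + 1 + 1) => (‖Phi f (m + 1) ↑x‖₊ : ℝ≥0∞)) ⟨y, hy⟩
        rw [← ENNReal.coe_toNNReal hsup.ne] at h1
        exact_mod_cast ENNReal.coe_le_coe.mp h1
      set S := nabla K (m + 1) with hS
      set T := {x : Fin (m + 1) → K | ∀ i, ‖x i‖ ≤ 1} with hT
      have hST : S ⊆ T := fun x hx => hx.1
      set e : S → T := Set.inclusion hST with he
      have hei : IsUniformInducing e := by
        have h1 : IsUniformInducing (Subtype.val : T → (Fin (m + 1) → K)) :=
          isUniformEmbedding_subtype_val.isUniformInducing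
        refine h1.of_comp_iff.mp ?_
        have : (Subtype.val : T → (Fin (m + 1) → K)) ∘ e
            = (Subtype.val : S → (Fin (m + 1) → K)) := rfl
        rw [this]
        exact isUniformEmbedding_subtype_val.isUniformInducing
      have hd : DenseRange e := by
        rw [Metric.denseRange_iff]
        rintro ⟨x, hx⟩ r hr
        obtain ⟨y, hyinj, hy1, hyclose, -⟩ :=
          exists_tuple_perturb hK (m + 1) x (∅ : Finset K) hr hx
        refine ⟨⟨y, hy1, hyinj⟩, ?_⟩
        rw [Subtype.dist_eq]
        show dist x y < r
        rw [dist_pi_lt_iff hr]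
        intro i
        rw [dist_eq_norm, norm_sub_rev]
        exact hyclose i
      set φ : S → K := fun a => Phi f m a.1 with hφ
      have hlip : LipschitzWith M φ := by
        refine LipschitzWith.of_dist_le_mul fun a b => ?_
        rw [dist_eq_norm, Subtype.dist_eq]
        exact lipschitz_est f hK M.coe_nonneg hbound a.1 b.1 a.2 b.2
      have huc : UniformContinuous φ := hlip.uniformContinuous
      have hdi : IsDenseInducing e := hei.isDenseInducing hd
      set g0 : T → K := hdi.extend φ with hg0
      have hg0c : UniformContinuous g0 := uniformContinuous_uniformly_extend hei hd huc
      have hag : ∀ a : S, g0 (e a) = φ a := fun a => uniformly_extend_of_ind hei hd huc a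
      refine ⟨fun x => if hx : ∀ i, ‖x i‖ ≤ 1 then g0 ⟨x, hx⟩ else 0, ?_, ?_⟩
      · rw [continuousOn_iff_continuous_restrict]
        have hres : Set.domRestrict {x : Fin (m + 1) → K | ∀ i, ‖x i‖ ≤ 1}
            (fun x => if hx : ∀ i, ‖x i‖ ≤ 1 then g0 ⟨x, hx⟩ else 0) = g0 := by
          funext a
          obtain ⟨x, hx⟩ := a
          simp only [Set.domRestrict_apply]
          exact dif_pos hx
        rw [hres]
        exact hg0c.continuous
      · intro x hx hxinj
        show (if h : ∀ i, ‖x i‖ ≤ 1 then g0 ⟨x, h⟩ else 0) = Phi f m x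
        rw [dif_pos hx]
        have heq : (⟨x, hx⟩ : T) = e ⟨x, ⟨hx, hxinj⟩⟩ := rfl
        rw [heq, hag ⟨x, ⟨hx, hxinj⟩⟩]
    simpa using hgoal

end DSW
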